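/- Let h be a Lie algebra over a field k and let h₀ be any invariant symmetric bilinear form on h. Then the bracket [(a,α),(b,β)] = ([a,b], −β∘ad_a + α∘ad_b) on the vector space h ⊕ h* (where h* is the dual space and ad_a denotes b ↦ [a,b]) satisfies the Jacobi identity, and the bilinear form Ω((a,α),(b,β)) = α(b) + β(a) + h₀(a,b) on h ⊕ h* is symmetric, invariant, and nondegenerate. In particular, the coadjoint extension of any Lie algebra is a metric Lie algebra. -/
import Mathlib


/-- The coadjoint-extension bracket on `h ⊕ h*`:
`[(a,α),(b,β)] = ([a,b], −β∘ad_a + α∘ad_b)`. -/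
def coadjointBracket (k : Type*) [Field k] (h : Type*) [LieRing h] [LieAlgebra k h]
    (x y : h × Module.Dual k h) : h × Module.Dual k h :=
  (⁅x.1, y.1⁆, - y.2 ∘ₗ LieAlgebra.ad k h x.1 + x.2 ∘ₗ LieAlgebra.ad k h y.1)

/-- For any Lie algebra `h` over a field `k` and any invariant symmetric
bilinear form `h₀` on `h`, the coadjoint-extension bracket on `h ⊕ h*` satisfies the Jacobi
identity, and the bilinear form `Ω((a,α),(b,β)) = α(b) + β(a) + h₀(a,b)` is symmetric,
invariant and nondegenerate; hence the coadjoint extension of any Lie algebra is a metric Lie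
algebra. -/
theorem coadjoint_extension_is_metric_lie_algebra
    (k : Type*) [Field k] (h : Type*) [LieRing h] [LieAlgebra k h]
    (h₀ : h →ₗ[k] h →ₗ[k] k)
    (h₀symm : ∀ a b : h, h₀ a b = h₀ b a)
    (h₀inv : ∀ a b c : h, h₀ ⁅c, a⁆ b + h₀ a ⁅c, b⁆ = 0) :
    (∀ x y z : h × Module.Dual k h,
        coadjointBracket k h x (coadjointBracket k h y z) +
          coadjointBracket k h y (coadjointBracket k h z x) +
            coadjointBracket k h z (coadjointBracket k h x y) = 0) ∧
    (∀ x y : h × Module.Dual k h,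
        (x.2 y.1 + y.2 x.1 + h₀ x.1 y.1) = (y.2 x.1 + x.2 y.1 + h₀ y.1 x.1)) ∧
    (∀ x y z : h × Module.Dual k h,
        ((coadjointBracket k h z x).2 y.1 + y.2 (coadjointBracket k h z x).1 +
            h₀ (coadjointBracket k h z x).1 y.1) +
          (x.2 (coadjointBracket k h z y).1 + (coadjointBracket k h z y).2 x.1 +
            h₀ x.1 (coadjointBracket k h z y).1) = 0) ∧
    (∀ x : h × Module.Dual k h,
        (∀ y : h × Module.Dual k h, x.2 y.1 + y.2 x.1 + h₀ x.1 y.1 = 0) → x = 0) := by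
  refine ⟨?_, ?_, ?_, ?_⟩
  · intro x y z
    refine Prod.ext ?_ ?_
    · simpa [coadjointBracket] using lie_jacobi x.1 y.1 z.1
    · ext w
      simp only [coadjointBracket, Prod.snd_add, Prod.snd_zero, LinearMap.add_apply,
        LinearMap.comp_apply, LinearMap.neg_apply, LieAlgebra.ad_apply, LinearMap.zero_apply,
        lie_lie, map_sub, map_add, map_neg]
      abel
  · intro x y
    rw [h₀symm]; ring
  · intro x y z
    simp only [coadjointBracket, LinearMap.add_apply, LinearMap.comp_apply,
      LinearMap.neg_apply, LieAlgebra.ad_apply]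
    have h1 := h₀inv x.1 y.1 z.1
    have h2 : (z.2 : Module.Dual k h) ⁅y.1, x.1⁆ = - z.2 ⁅x.1, y.1⁆ := by
      rw [← lie_skew x.1 y.1, map_neg, neg_neg]
    linear_combination h1 + h2
  · intro x hx
    have ha : x.1 = 0 := by
      rw [← Module.forall_dual_apply_eq_zero_iff k]
      intro β
      have := hx (0, β)
      simpa using this
    have hα : x.2 = 0 := by
      ext b
      have := hx (b, 0)
      simp [ha] at this
      simpa using this
    exact Prod.ext ha hα
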